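/- Let n ≥ 2 and p > 0. The symmetrized ellipsoid 𝔼_{p,n} is a bounded domain (a bounded, open, connected subset of ℂⁿ) which is (1,2,…,n)-balanced: for every (z₁,…,z_n) ∈ 𝔼_{p,n} and every λ ∈ ℂ with |λ| ≤ 1, the point (λz₁, λ²z₂, …, λⁿz_n) belongs to 𝔼_{p,n}. -/

import Mathlib

open Finset

/-- The symmetrization map `π_n : ℂⁿ → ℂⁿ`, whose `k`-th component is the
`(k+1)`-st elementary symmetric polynomial of the coordinates. -/
noncomputable def piMap (n : ℕ) (z : Fin n → ℂ) : Fin n → ℂ :=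
  fun k => ∑ s ∈ Finset.powersetCard (k.1 + 1) Finset.univ, ∏ j ∈ s, z j

/-- The generalized complex ellipsoid `𝔹_{p,n} = {z : ∑ |z_j|^(2p) < 1}`. -/
noncomputable def ellipsoid (p : ℝ) (n : ℕ) : Set (Fin n → ℂ) :=
  {z | ∑ j, ‖z j‖ ^ (2 * p) < 1}

/-- The symmetrized `(p,n)`-ellipsoid `𝔼_{p,n} = π_n(𝔹_{p,n})`. -/
noncomputable def symEllipsoid (p : ℝ) (n : ℕ) : Set (Fin n → ℂ) :=
  piMap n '' ellipsoid p n

/-- The Euclidean unit ball in `ℂⁿ`. -/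
def unitBall (n : ℕ) : Set (Fin n → ℂ) :=
  {z | ∑ j, ‖z j‖ ^ 2 < 1}

/-- `f` is a proper holomorphic map from the domain `D` onto (into) the domain `G`:
it is holomorphic on `D`, maps `D` into `G`, and preimages of compact subsets of `G`
are compact. -/
def IsProperHolomorphic {n : ℕ} (f : (Fin n → ℂ) → (Fin n → ℂ))
    (D G : Set (Fin n → ℂ)) : Prop :=
  DifferentiableOn ℂ f D ∧ Set.MapsTo f D G ∧
    ∀ K : Set (Fin n → ℂ), K ⊆ G → IsCompact K → IsCompact (D ∩ f ⁻¹' K)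

/-- `φ` is an automorphism of the domain `D`: a holomorphic bijection of `D` onto
itself with holomorphic inverse. -/
def IsAutomorphismOf {n : ℕ} (φ : (Fin n → ℂ) → (Fin n → ℂ))
    (D : Set (Fin n → ℂ)) : Prop :=
  DifferentiableOn ℂ φ D ∧ Set.BijOn φ D D ∧
    ∃ ψ : (Fin n → ℂ) → (Fin n → ℂ), DifferentiableOn ℂ ψ D ∧ Set.InvOn ψ φ D D

/-- `f : ℂⁿ → ℂⁿ` is a polynomial mapping. -/
def IsPolynomialMap {n : ℕ} (f : (Fin n → ℂ) → (Fin n → ℂ)) : Prop :=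
  ∃ P : Fin n → MvPolynomial (Fin n) ℂ, ∀ z k, f z k = MvPolynomial.eval z (P k)

lemma piMap_apply_eq_esymm {n : ℕ} (z : Fin n → ℂ) (k : Fin n) :
    piMap n z k = (Multiset.map z Finset.univ.val).esymm (k.1 + 1) :=
  (Finset.esymm_map_val z Finset.univ (k.1 + 1)).symm

lemma ellipsoid_isOpen {p : ℝ} (hp : 0 < p) (n : ℕ) : IsOpen (ellipsoid p n) := by
  have hc : Continuous fun z : Fin n → ℂ => ∑ j, ‖z j‖ ^ (2 * p) := by
    refine continuous_finset_sum _ fun j _ => ?_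
    have h1 : Continuous fun x : ℝ => x ^ (2 * p) := by
      rw [continuous_iff_continuousAt]
      intro x
      exact Real.continuousAt_rpow_const x _ (Or.inr (by positivity))
    exact h1.comp ((continuous_apply j).norm)
  exact isOpen_lt hc continuous_const

lemma zero_mem_ellipsoid {p : ℝ} (hp : 0 < p) (n : ℕ) : (0 : Fin n → ℂ) ∈ ellipsoid p n := by
  have : ∀ j : Fin n, ‖(0 : Fin n → ℂ) j‖ ^ (2 * p) = 0 := by
    intro j
    simp [Real.zero_rpow (by positivity : (2 : ℝ) * p ≠ 0)]
  simp only [ellipsoid, Set.mem_setOf_eq]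
  rw [Finset.sum_congr rfl fun j _ => this j]
  simp

lemma smul_mem_ellipsoid {p : ℝ} (hp : 0 < p) {n : ℕ} {z : Fin n → ℂ}
    (hz : z ∈ ellipsoid p n) {l : ℂ} (hl : ‖l‖ ≤ 1) :
    (fun j => l * z j) ∈ ellipsoid p n := by
  have hz' : ∑ j, ‖z j‖ ^ (2 * p) < 1 := hz
  show ∑ j, ‖l * z j‖ ^ (2 * p) < 1
  refine lt_of_le_of_lt (Finset.sum_le_sum fun j _ => ?_) hz'
  rw [norm_mul, Real.mul_rpow (norm_nonneg _) (norm_nonneg _)]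
  calc ‖l‖ ^ (2 * p) * ‖z j‖ ^ (2 * p)
      ≤ 1 * ‖z j‖ ^ (2 * p) := by
        refine mul_le_mul_of_nonneg_right ?_ (Real.rpow_nonneg (norm_nonneg _) _)
        exact Real.rpow_le_one (norm_nonneg l) hl (by positivity)
    _ = ‖z j‖ ^ (2 * p) := one_mul _

lemma perm_mem_ellipsoid {p : ℝ} {n : ℕ} {z : Fin n → ℂ} (σ : Equiv.Perm (Fin n))
    (hz : z ∈ ellipsoid p n) : z ∘ σ ∈ ellipsoid p n := by
  show ∑ j, ‖z (σ j)‖ ^ (2 * p) < 1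
  rw [Equiv.sum_comp σ (fun j => ‖z j‖ ^ (2 * p))]
  exact hz
open Polynomial in

lemma exists_comp_perm_eq {α : Type*} :
    ∀ {n : ℕ} {z z' : Fin n → α},
      Multiset.map z Finset.univ.val = Multiset.map z' Finset.univ.val →
      ∃ σ : Equiv.Perm (Fin n), z ∘ σ = z'
  | 0, z, z', _ => ⟨1, funext fun i => i.elim0⟩
  | n + 1, z, z', h => by
    have hmem : z' (Fin.last n) ∈ Multiset.map z Finset.univ.val := by
      rw [h]; exact Multiset.mem_map_of_mem _ (Finset.mem_univ_val _)
    obtain ⟨i, -, hi⟩ := Multiset.mem_map.mp hmem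
    set τ : Equiv.Perm (Fin (n + 1)) := Equiv.swap i (Fin.last n) with hτdef
    have hτ : Multiset.map (z ∘ τ) Finset.univ.val = Multiset.map z Finset.univ.val := by
      rw [← Multiset.map_map, Multiset.map_univ_val_equiv]
    have hdec : ∀ w : Fin (n + 1) → α, Multiset.map w Finset.univ.val
        = w (Fin.last n) ::ₘ Multiset.map (w ∘ Fin.castSucc) Finset.univ.val := by
      intro w
      rw [Fin.univ_castSuccEmb, Finset.cons_val, Multiset.map_cons, Finset.map_val,
        Multiset.map_map]
      rfl
    have h2 : (z ∘ τ) (Fin.last n) = z' (Fin.last n) := by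
      simp [hτdef, Equiv.swap_apply_right, hi]
    have h3 : Multiset.map ((z ∘ τ) ∘ Fin.castSucc) Finset.univ.val
        = Multiset.map (z' ∘ Fin.castSucc) Finset.univ.val := by
      have h4 := (hdec (z ∘ τ)).symm.trans ((hτ.trans h).trans (hdec z'))
      rw [h2] at h4
      exact (Multiset.cons_inj_right _).mp h4
    obtain ⟨σ₀, hσ₀⟩ := exists_comp_perm_eq h3
    refine ⟨(finSuccEquivLast.symm.permCongr σ₀.optionCongr).trans τ, funext fun x => ?_⟩
    induction x using Fin.lastCases with
    | last =>
      have : (finSuccEquivLast.symm.permCongr σ₀.optionCongr) (Fin.last n) = Fin.last n := by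
        simp [Equiv.permCongr_apply, finSuccEquivLast_last]
      show z (τ ((finSuccEquivLast.symm.permCongr σ₀.optionCongr) (Fin.last n))) = z' (Fin.last n)
      rw [this]; exact h2
    | cast j =>
      have : (finSuccEquivLast.symm.permCongr σ₀.optionCongr) (Fin.castSucc j)
          = Fin.castSucc (σ₀ j) := by
        simp [Equiv.permCongr_apply, finSuccEquivLast_castSucc]
      show z (τ ((finSuccEquivLast.symm.permCongr σ₀.optionCongr) (Fin.castSucc j)))
          = z' (Fin.castSucc j)
      rw [this]
      exact congrFun hσ₀ j
open Polynomial in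
lemma multiset_map_eq_of_piMap_eq {n : ℕ} {z z' : Fin n → ℂ}
    (h : piMap n z = piMap n z') :
    Multiset.map z Finset.univ.val = Multiset.map z' Finset.univ.val := by
  set s := Multiset.map z Finset.univ.val with hsdef
  set t := Multiset.map z' Finset.univ.val with htdef
  have hcs : Multiset.card s = n := by simp [hsdef]
  have hct : Multiset.card t = n := by simp [htdef]
  have hesymm : ∀ m, m ≤ n → s.esymm m = t.esymm m := by
    intro m hm
    rcases Nat.eq_zero_or_pos m with rfl | hm0
    · simp [Multiset.esymm, Multiset.powersetCard_zero_left]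
    · have hk : m - 1 < n := by omega
      have h2 := congrFun h ⟨m - 1, hk⟩
      rw [piMap_apply_eq_esymm, piMap_apply_eq_esymm] at h2
      rw [Nat.sub_add_cancel hm0] at h2; exact h2
  have hdegs : (Multiset.map (fun a => X - C a) s).prod.natDegree = n := by
    rw [natDegree_multiset_prod_of_monic _ (fun f hf => by
      obtain ⟨a, -, rfl⟩ := Multiset.mem_map.mp hf; exact monic_X_sub_C a)]
    simp [Multiset.map_map, Function.comp_def, natDegree_X_sub_C, hcs]
  have hdegt : (Multiset.map (fun a => X - C a) t).prod.natDegree = n := by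
    rw [natDegree_multiset_prod_of_monic _ (fun f hf => by
      obtain ⟨a, -, rfl⟩ := Multiset.mem_map.mp hf; exact monic_X_sub_C a)]
    simp [Multiset.map_map, Function.comp_def, natDegree_X_sub_C, hct]
  have hP : (Multiset.map (fun a => X - C a) s).prod
      = (Multiset.map (fun a => X - C a) t).prod := by
    ext k
    rcases le_or_gt k n with hk | hk
    · rw [Multiset.prod_X_sub_C_coeff s (by omega), Multiset.prod_X_sub_C_coeff t (by omega),
        hcs, hct, hesymm _ (Nat.sub_le n k)]
    · rw [coeff_eq_zero_of_natDegree_lt (by omega), coeff_eq_zero_of_natDegree_lt (by omega)]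
  have h5 := congrArg Polynomial.roots hP
  rwa [roots_multiset_prod_X_sub_C, roots_multiset_prod_X_sub_C] at h5

open Polynomial in
lemma piMap_surjective {n : ℕ} (hn : 0 < n) : Function.Surjective (piMap n) := by
  intro w
  obtain ⟨q, hq⟩ : ∃ q : Polynomial ℂ,
      q = X ^ n + ∑ j : Fin n, C ((-1) ^ (j.1 + 1) * w j) * X ^ (n - 1 - j.1) := ⟨_, rfl⟩
  have hdegr : (∑ j : Fin n, C ((-1) ^ (j.1 + 1) * w j) * X ^ (n - 1 - j.1)).degree
      < (X ^ n : Polynomial ℂ).degree := by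
    rw [degree_X_pow]
    refine lt_of_le_of_lt (degree_sum_le _ _) ?_
    rw [Finset.sup_lt_iff (by exact_mod_cast WithBot.bot_lt_coe n)]
    intro j _
    refine lt_of_le_of_lt (degree_C_mul_X_pow_le _ _) ?_
    exact_mod_cast WithBot.coe_lt_coe.mpr (by omega)
  have hmonic : q.Monic := hq ▸ (monic_X_pow n).add_of_left hdegr
  have hdeg' : q.degree = n := by
    rw [hq, degree_add_eq_left_of_degree_lt hdegr, degree_X_pow]
  have hdeg : q.natDegree = n := natDegree_eq_of_degree_eq_some hdeg'
  have hcoeff : ∀ m (h1 : 1 ≤ m) (h2 : m ≤ n) (hmn : m - 1 < n),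
      q.coeff (n - m) = (-1) ^ m * w ⟨m - 1, hmn⟩ := by
    intro m h1 h2 hmn
    rw [hq, coeff_add, coeff_X_pow, if_neg (by omega), zero_add, finset_sum_coeff]
    rw [Finset.sum_eq_single (⟨m - 1, hmn⟩ : Fin n)]
    · have hval : ((⟨m - 1, hmn⟩ : Fin n) : ℕ) = m - 1 := rfl
      rw [coeff_C_mul, coeff_X_pow, hval, if_pos (by omega), mul_one]
      congr 2
      omega
    · intro j _ hj
      rw [coeff_C_mul, coeff_X_pow, if_neg, mul_zero]
      intro hc
      apply hj
      have hj2 := j.2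
      apply Fin.ext
      show (j : ℕ) = m - 1
      omega
    · intro hmem; exact absurd (Finset.mem_univ _) hmem
  have hsplits : Splits q := IsAlgClosed.splits q
  have hroots : Multiset.card q.roots = n := by
    rw [← hdeg]; exact splits_iff_card_roots.mp hsplits
  have hesymm : ∀ m (h1 : 1 ≤ m) (h2 : m ≤ n) (hmn : m - 1 < n),
      q.roots.esymm m = w ⟨m - 1, hmn⟩ := by
    intro m h1 h2 hmn
    have h3 : n - m ≤ q.natDegree := by omega
    have h4 := coeff_eq_esymm_roots_of_card (hroots.trans hdeg.symm) h3
    rw [hmonic.leadingCoeff, one_mul, hdeg] at h4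
    have hnm : n - (n - m) = m := by omega
    rw [hnm, hcoeff m h1 h2 hmn] at h4
    exact (mul_left_cancel₀ (pow_ne_zero _ (neg_ne_zero.mpr one_ne_zero)) h4).symm
  set l := q.roots.toList with hl
  have hlen : l.length = n := by rw [hl, Multiset.length_toList, hroots]
  refine ⟨fun i => l.get (Fin.cast hlen.symm i), funext fun k => ?_⟩
  have hofn : List.ofFn (fun i : Fin n => l.get (Fin.cast hlen.symm i)) = l := by
    apply List.ext_getElem (by simp [hlen])
    intro i h1 h2
    simp [List.getElem_ofFn]
  have hmap : Multiset.map (fun i : Fin n => l.get (Fin.cast hlen.symm i)) Finset.univ.val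
      = q.roots := by
    rw [Fin.univ_val_map, hofn, hl, Multiset.coe_toList]
  rw [piMap_apply_eq_esymm, hmap, hesymm (k.1 + 1) (by omega) (by omega) (by omega)]
  exact congrArg w (Fin.ext (by simp))

lemma continuous_piMap (n : ℕ) : Continuous (piMap n) :=
  continuous_pi fun _ => continuous_finset_sum _ fun s _ =>
    continuous_finset_prod _ fun j _ => continuous_apply j

open Polynomial in
lemma norm_coord_le {n : ℕ} (hn : 0 < n) (z : Fin n → ℂ) (i : Fin n) :
    ‖z i‖ ≤ max 1 (n * ‖piMap n z‖) := by
  rcases le_or_gt ‖z i‖ 1 with h1 | h1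
  · exact le_max_of_le_left h1
  set s := Multiset.map z Finset.univ.val with hsdef
  have hcs : Multiset.card s = n := by simp [hsdef]
  set P := (Multiset.map (fun a => X - C a) s).prod with hPdef
  have hmonic : P.Monic := by
    rw [hPdef]
    exact monic_multiset_prod_of_monic s _ fun a _ => monic_X_sub_C a
  have hdeg : P.natDegree = n := by
    rw [hPdef, natDegree_multiset_prod_of_monic _ (fun f hf => by
      obtain ⟨a, -, rfl⟩ := Multiset.mem_map.mp hf; exact monic_X_sub_C a)]
    simp [Multiset.map_map, Function.comp_def, natDegree_X_sub_C, hcs]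
  have heval : P.eval (z i) = 0 := by
    rw [hPdef, eval_multiset_prod]
    apply Multiset.prod_eq_zero
    rw [Multiset.map_map]
    refine Multiset.mem_map.mpr ⟨z i, ?_, by simp⟩
    exact Multiset.mem_map_of_mem _ (Finset.mem_univ_val i)
  have hC0nn : (0:ℝ) ≤ ‖piMap n z‖ := norm_nonneg _
  have hcoeffb : ∀ k, k < n → ‖P.coeff k‖ ≤ ‖piMap n z‖ := by
    intro k hk
    rw [hPdef, Multiset.prod_X_sub_C_coeff s (by omega)]
    rw [norm_mul, norm_pow, norm_neg, norm_one, one_pow, one_mul]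
    have hsk : s.esymm (Multiset.card s - k) = piMap n z ⟨n - k - 1, by omega⟩ := by
      rw [piMap_apply_eq_esymm]
      congr 1
      show Multiset.card s - k = (n - k - 1) + 1
      omega
    rw [hsk]
    exact norm_le_pi_norm (piMap n z) _
  have hsum : (z i) ^ n = -∑ k ∈ Finset.range n, P.coeff k * (z i) ^ k := by
    have hev : (0:ℂ) = ∑ k ∈ Finset.range (n + 1), P.coeff k * (z i) ^ k := by
      rw [← heval, eval_eq_sum_range, hdeg]
    rw [Finset.sum_range_succ] at hev
    have hcn : P.coeff n = 1 := by rw [← hdeg]; exact hmonic.coeff_natDegree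
    rw [hcn, one_mul] at hev
    exact eq_neg_of_add_eq_zero_right hev.symm
  have hnormsum : ‖z i‖ ^ n ≤ ∑ k ∈ Finset.range n, ‖piMap n z‖ * ‖z i‖ ^ k := by
    calc ‖z i‖ ^ n = ‖(z i) ^ n‖ := (norm_pow _ _).symm
    _ = ‖∑ k ∈ Finset.range n, P.coeff k * (z i) ^ k‖ := by rw [hsum, norm_neg]
    _ ≤ ∑ k ∈ Finset.range n, ‖P.coeff k * (z i) ^ k‖ := norm_sum_le _ _
    _ ≤ ∑ k ∈ Finset.range n, ‖piMap n z‖ * ‖z i‖ ^ k := by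
        refine Finset.sum_le_sum fun k hk => ?_
        rw [norm_mul, norm_pow]
        exact mul_le_mul_of_nonneg_right (hcoeffb k (Finset.mem_range.mp hk)) (by positivity)
  have hbound : ‖z i‖ ^ n ≤ (n * ‖piMap n z‖) * ‖z i‖ ^ (n - 1) := by
    calc ‖z i‖ ^ n ≤ ∑ _k ∈ Finset.range n, ‖piMap n z‖ * ‖z i‖ ^ (n - 1) := by
          refine le_trans hnormsum (Finset.sum_le_sum fun k hk => ?_)
          have hk' := Finset.mem_range.mp hk
          exact mul_le_mul_of_nonneg_left
            (pow_le_pow_right₀ h1.le (by omega)) hC0nn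
    _ = (n * ‖piMap n z‖) * ‖z i‖ ^ (n - 1) := by
        rw [Finset.sum_const, Finset.card_range, nsmul_eq_mul]; ring
  have hpos : (0:ℝ) < ‖z i‖ ^ (n - 1) := by positivity
  have hfin : ‖z i‖ ≤ n * ‖piMap n z‖ := by
    have hpow : ‖z i‖ ^ n = ‖z i‖ * ‖z i‖ ^ (n - 1) := by
      rw [← pow_succ']
      congr 1
      omega
    rw [hpow] at hbound
    exact le_of_mul_le_mul_right
      (by rw [mul_comm ‖z i‖, mul_comm (n * ‖piMap n z‖)] at hbound ⊢; exact hbound) hpos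
  exact le_max_of_le_right hfin

lemma isProperMap_piMap {n : ℕ} (hn : 0 < n) : IsProperMap (piMap n) := by
  rw [isProperMap_iff_isCompact_preimage]
  refine ⟨continuous_piMap n, fun K hK => ?_⟩
  obtain ⟨R, hR⟩ := hK.isBounded.subset_closedBall 0
  have hsub : piMap n ⁻¹' K ⊆ Metric.closedBall 0 (max 1 (n * R)) := by
    intro z hz
    rw [Metric.mem_closedBall, dist_zero_right,
      pi_norm_le_iff_of_nonneg (le_trans zero_le_one (le_max_left _ _))]
    intro i
    refine le_trans (norm_coord_le hn z i) (max_le_max le_rfl ?_)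
    have hmem : ‖piMap n z‖ ≤ R := by
      have := hR hz
      rwa [Metric.mem_closedBall, dist_zero_right] at this
    exact mul_le_mul_of_nonneg_left hmem (Nat.cast_nonneg n)
  exact (isCompact_closedBall _ _).of_isClosed_subset
    (hK.isClosed.preimage (continuous_piMap n)) hsub

lemma isQuotientMap_piMap {n : ℕ} (hn : 0 < n) : Topology.IsQuotientMap (piMap n) :=
  IsClosedMap.isQuotientMap (isProperMap_piMap hn).isClosedMap (continuous_piMap n)
    (piMap_surjective hn)

lemma preimage_symEllipsoid {p : ℝ} {n : ℕ} :
    piMap n ⁻¹' symEllipsoid p n = ellipsoid p n := by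
  apply Set.Subset.antisymm
  · rintro z ⟨z', hz', heq⟩
    obtain ⟨σ, hσ⟩ := exists_comp_perm_eq (multiset_map_eq_of_piMap_eq heq)
    rw [← hσ]
    exact perm_mem_ellipsoid σ hz'
  · intro z hz
    exact ⟨z, hz, rfl⟩

/-- `𝔼_{p,n}` is a bounded domain which is `(1,2,…,n)`-balanced. -/
theorem symEllipsoid_bounded_balanced_domain (n : ℕ) (hn : 2 ≤ n) (p : ℝ)
    (hp : 0 < p) :
    Bornology.IsBounded (symEllipsoid p n) ∧
      IsOpen (symEllipsoid p n) ∧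
      IsConnected (symEllipsoid p n) ∧
      ∀ z ∈ symEllipsoid p n, ∀ l : ℂ, ‖l‖ ≤ 1 →
        (fun k : Fin n => l ^ (k.1 + 1) * z k) ∈ symEllipsoid p n := by
  have hn0 : 0 < n := by omega
  have hcont := continuous_piMap n
  refine ⟨?_, ?_, ?_, ?_⟩
  · -- bounded
    have hsub : symEllipsoid p n ⊆ piMap n '' Metric.closedBall 0 1 := by
      rintro _ ⟨z, hz, rfl⟩
      refine ⟨z, ?_, rfl⟩
      rw [Metric.mem_closedBall, dist_zero_right, pi_norm_le_iff_of_nonneg zero_le_one]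
      intro j
      by_contra hc
      push_neg at hc
      have h1 : (1:ℝ) ≤ ‖z j‖ ^ (2 * p) := Real.one_le_rpow hc.le (by positivity)
      have h2 : ‖z j‖ ^ (2 * p) ≤ ∑ i, ‖z i‖ ^ (2 * p) :=
        Finset.single_le_sum (fun i _ => Real.rpow_nonneg (norm_nonneg _) _)
          (Finset.mem_univ j)
      have h3 := hz
      simp only [ellipsoid, Set.mem_setOf_eq] at h3
      linarith
    exact (((isCompact_closedBall _ _).image hcont).isBounded).subset hsub
  · -- open
    exact ((isQuotientMap_piMap hn0).isOpen_preimage).mp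
      (by rw [preimage_symEllipsoid]; exact ellipsoid_isOpen hp n)
  · -- connected
    refine IsConnected.image ?_ _ hcont.continuousOn
    apply IsPathConnected.isConnected
    refine ⟨0, zero_mem_ellipsoid hp n, ?_⟩
    intro z hz
    apply JoinedIn.of_segment_subset
    intro x hx
    rw [segment_eq_image] at hx
    obtain ⟨t, ht, rfl⟩ := hx
    have hmem : (fun j => ((t : ℂ)) * z j) ∈ ellipsoid p n := by
      refine smul_mem_ellipsoid hp hz ?_
      rw [Complex.norm_real]
      rw [Set.mem_Icc] at ht
      rw [Real.norm_eq_abs, abs_of_nonneg ht.1]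
      exact ht.2
    have heq : (1 - t) • (0 : Fin n → ℂ) + t • z = fun j => ((t : ℂ)) * z j := by
      funext j
      simp [Complex.real_smul]
    show (1 - t) • (0 : Fin n → ℂ) + t • z ∈ ellipsoid p n
    rw [heq]
    exact hmem
  · -- balanced
    rintro _ ⟨z, hz, rfl⟩ l hl
    refine ⟨fun j => l * z j, smul_mem_ellipsoid hp hz hl, ?_⟩
    funext k
    show piMap n (fun j => l * z j) k = l ^ (k.1 + 1) * piMap n z k
    simp only [piMap]
    rw [Finset.mul_sum]
    refine Finset.sum_congr rfl fun s hs => ?_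
    rw [Finset.prod_mul_distrib, Finset.prod_const, (Finset.mem_powersetCard.mp hs).2]
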